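/- Set n_k = ⌊exp(k exp(−(log k)^{1/6}))⌋. Then ( 1 − ( n_k log₂ n_k / (n_{k+1} log₂ n_{k+1}) )^{1/2} ) · (log₂ n_{k+1})^{2/3} → 0 as k → ∞. -/

import Mathlib

open MeasureTheory ProbabilityTheory Filter

/-- `llog u = log (log (u ⊔ e))`. -/
noncomputable def llog (x : ℝ) : ℝ := Real.log (Real.log (max x (Real.exp 1)))

/-- Sup-norm over `[0,1]`. -/
noncomputable def supNorm (f : ℝ → ℝ) : ℝ := ⨆ t : Set.Icc (0:ℝ) 1, |f t|

/-- Membership in the Strassen set `S₁`. -/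
def InStrassen1 (f : ℝ → ℝ) : Prop :=
  ∃ f' : ℝ → ℝ, Measurable f' ∧
    (∀ x ∈ Set.Icc (0:ℝ) 1, f x = ∫ t in (0:ℝ)..x, f' t) ∧
    (∫ t in (0:ℝ)..1, (f' t) ^ 2) ≤ 1

/-- Membership in `S₂ = {f ∈ S₁ : f 1 = 0}`. -/
def InStrassen2 (f : ℝ → ℝ) : Prop := InStrassen1 f ∧ f 1 = 0

variable {Ω : Type*} [MeasurableSpace Ω]

/-- Empirical distribution function `F_n`. -/
noncomputable def empF (U : ℕ → Ω → ℝ) (n : ℕ) (t : ℝ) (ω : Ω) : ℝ :=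
  (Set.ncard {i : ℕ | i < n ∧ U i ω ≤ t} : ℝ) / n

/-- Uniform empirical process `α_n(t) = √n (F_n(t) - t)`. -/
noncomputable def empProc (U : ℕ → Ω → ℝ) (n : ℕ) (t : ℝ) (ω : Ω) : ℝ :=
  Real.sqrt n * (empF U n t ω - t)

/-- `H_n(t) = n (F_n(t) - t)`. -/
noncomputable def empH (U : ℕ → Ω → ℝ) (n : ℕ) (t : ℝ) (ω : Ω) : ℝ :=
  (n : ℝ) * (empF U n t ω - t)

/-- The generalized inverse `F_n⁻¹(t) = inf {u : F_n(u) ≥ t}`. -/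
noncomputable def empQF (U : ℕ → Ω → ℝ) (n : ℕ) (t : ℝ) (ω : Ω) : ℝ :=
  sInf {u : ℝ | t ≤ empF U n u ω}

/-- Uniform quantile process `β_n(t) = √n (F_n⁻¹(t) - t)`. -/
noncomputable def quantProc (U : ℕ → Ω → ℝ) (n : ℕ) (t : ℝ) (ω : Ω) : ℝ :=
  Real.sqrt n * (empQF U n t ω - t)

/-- `(U_i)` are i.i.d. uniform on `[0,1]`. -/
def IsUniformIID (μ : Measure Ω) (U : ℕ → Ω → ℝ) : Prop :=
  (∀ i, Measurable (U i)) ∧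
  iIndepFun U μ ∧
  (∀ i, Measure.map (U i) μ = MeasureTheory.volume.restrict (Set.Icc (0:ℝ) 1))

/-- The blocking sequence `n_k = ⌊exp (k exp (-(log k)^(1/6)))⌋`. -/
noncomputable def nseq (k : ℕ) : ℕ :=
  ⌊Real.exp (k * Real.exp (-(Real.log k) ^ ((1:ℝ)/6)))⌋₊

/-- `k(n)`: the index `k` with `n ∈ N_k = {n_k, …, n_{k+1} - 1}`. -/
noncomputable def kofn (n : ℕ) : ℕ := sSup {k : ℕ | nseq k ≤ n}


namespace SVaux

noncomputable def eps (k : ℕ) : ℝ := Real.exp (-(Real.log k) ^ ((1:ℝ)/6))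

noncomputable def aa (k : ℕ) : ℝ := k * eps k

lemma eps_pos (k : ℕ) : 0 < eps k := Real.exp_pos _

lemma nseq_eq (k : ℕ) : nseq k = ⌊Real.exp (aa k)⌋₊ := rfl

lemma log_nonneg' (k : ℕ) : 0 ≤ Real.log k := Real.log_natCast_nonneg k

lemma eps_le_one (k : ℕ) : eps k ≤ 1 := by
  rw [eps, Real.exp_le_one_iff]
  simpa using Real.rpow_nonneg (log_nonneg' k) _

/-- For `u ≥ 1, δ ≥ 0`: `(u+δ)^{1/6} ≤ u^{1/6} + δ`. -/
lemma rpow6_add_le {u δ : ℝ} (hu : 1 ≤ u) (hδ : 0 ≤ δ) :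
    (u + δ) ^ ((1:ℝ)/6) ≤ u ^ ((1:ℝ)/6) + δ := by
  set a := u ^ ((1:ℝ)/6) with ha
  have hu0 : (0:ℝ) ≤ u := by linarith
  have ha1 : 1 ≤ a := Real.one_le_rpow hu (by norm_num)
  have ha0 : 0 ≤ a := by linarith
  have ha6 : a ^ (6:ℕ) = u := by
    rw [ha, ← Real.rpow_natCast (u ^ ((1:ℝ)/6)) 6, ← Real.rpow_mul hu0]
    norm_num
  have h1 : a ^ (5:ℕ) ≤ (a + δ) ^ (5:ℕ) := by
    apply pow_le_pow_left₀ ha0; linarith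
  have h5 : (1:ℝ) ≤ a ^ (5:ℕ) := one_le_pow₀ ha1
  have key : u + δ ≤ (a + δ) ^ (6:ℕ) := by
    have h2 : (a + δ) ^ (6:ℕ) = (a + δ) ^ (5:ℕ) * (a + δ) := by ring
    have h3 : a ^ (5:ℕ) * (a + δ) ≤ (a + δ) ^ (5:ℕ) * (a + δ) :=
      mul_le_mul_of_nonneg_right h1 (by linarith)
    have h4 : a ^ (5:ℕ) * (a + δ) = u + a ^ (5:ℕ) * δ := by
      rw [mul_add]; rw [show a ^ (5:ℕ) * a = a ^ (6:ℕ) by ring, ha6]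
    nlinarith
  calc (u + δ) ^ ((1:ℝ)/6) ≤ ((a + δ) ^ (6:ℕ)) ^ ((1:ℝ)/6) :=
        Real.rpow_le_rpow (by linarith) key (by norm_num)
    _ = a + δ := by
        rw [← Real.rpow_natCast (a + δ) 6, ← Real.rpow_mul (by linarith)]
        norm_num

lemma eps_antitone {k : ℕ} (hk : 1 ≤ k) : eps (k + 1) ≤ eps k := by
  apply Real.exp_le_exp.mpr
  apply neg_le_neg
  apply Real.rpow_le_rpow (log_nonneg' k) _ (by norm_num)
  apply Real.log_le_log (by exact_mod_cast hk)
  exact_mod_cast Nat.le_succ k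

lemma aa_mono {k : ℕ} (hk : 1 ≤ Real.log k) : aa k ≤ aa (k + 1) := by
  have hk1 : (1:ℝ) < (k:ℝ) := by
    by_contra h
    push_neg at h
    have := Real.log_nonpos (by positivity) h
    linarith
  have hk0 : (0:ℝ) < (k:ℝ) := by linarith
  have hk10 : (0:ℝ) < (k:ℝ) + 1 := by linarith
  set u := Real.log k with hu
  set v := Real.log ((k:ℝ) + 1) with hv
  have hδ : 0 ≤ v - u := sub_nonneg.mpr (Real.log_le_log hk0 (by linarith))
  have key : v ^ ((1:ℝ)/6) ≤ u ^ ((1:ℝ)/6) + (v - u) := by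
    have := rpow6_add_le hk hδ
    rwa [show u + (v - u) = v by ring] at this
  have hexp : Real.exp (u - v) = (k:ℝ) / ((k:ℝ) + 1) := by
    rw [Real.exp_sub, hu, hv, Real.exp_log hk0, Real.exp_log hk10]
  have heps : eps k * ((k:ℝ) / ((k:ℝ) + 1)) ≤ eps (k + 1) := by
    rw [eps, eps, ← hexp, ← Real.exp_add]
    apply Real.exp_le_exp.mpr
    have : Real.log ((k + 1 : ℕ) : ℝ) = v := by push_cast; rw [hv]
    rw [this]
    linarith
  have : (↑(k + 1) : ℝ) * eps (k + 1) ≥ ((k:ℝ) + 1) * (eps k * ((k:ℝ) / ((k:ℝ) + 1))) := by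
    push_cast
    apply mul_le_mul_of_nonneg_left heps (by linarith)
  rw [aa, aa]
  calc (k:ℝ) * eps k = ((k:ℝ) + 1) * (eps k * ((k:ℝ) / ((k:ℝ) + 1))) := by
        field_simp
    _ ≤ (↑(k + 1) : ℝ) * eps (k + 1) := this

lemma aa_succ_le {k : ℕ} (hk : 1 ≤ k) : aa (k + 1) ≤ aa k + eps k := by
  have h := eps_antitone hk
  have h0 := (eps_pos (k + 1)).le
  rw [aa, aa]
  push_cast
  nlinarith [Nat.cast_nonneg (α := ℝ) k]

lemma rpow16_le_half_log {k : ℕ} (hk : 16 ≤ Real.log k) :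
    (Real.log k) ^ ((1:ℝ)/6) ≤ Real.log k / 2 := by
  set u := Real.log k with hu
  have hu1 : (1:ℝ) ≤ u := by linarith
  have h2 : u ≤ (u / 2) ^ (2:ℕ) := by nlinarith
  calc u ^ ((1:ℝ)/6) ≤ u ^ ((1:ℝ)/2) :=
        Real.rpow_le_rpow_of_exponent_le hu1 (by norm_num)
    _ ≤ ((u / 2) ^ (2:ℕ)) ^ ((1:ℝ)/2) :=
        Real.rpow_le_rpow (by linarith) h2 (by norm_num)
    _ = u / 2 := by
        rw [← Real.rpow_natCast (u / 2) 2, ← Real.rpow_mul (by linarith)]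
        norm_num

lemma aa_ge_sq {k : ℕ} (hk : 16 ≤ Real.log k) : (Real.log k) ^ (2:ℕ) / 16 ≤ aa k := by
  have hk0 : (0:ℝ) < (k:ℝ) := by
    rcases Nat.eq_zero_or_pos k with h | h
    · subst h; simp only [Nat.cast_zero, Real.log_zero] at hk; linarith
    · exact_mod_cast h
  set u := Real.log k with hu
  have hkexp : (k:ℝ) = Real.exp u := (Real.exp_log hk0).symm
  have heps : Real.exp (-(u / 2)) ≤ eps k := by
    rw [eps]
    apply Real.exp_le_exp.mpr
    have := rpow16_le_half_log hk
    rw [← hu] at *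
    linarith
  have h1 : Real.exp (u / 2) ≤ aa k := by
    rw [aa, hkexp]
    calc Real.exp (u / 2) = Real.exp u * Real.exp (-(u / 2)) := by
          rw [← Real.exp_add]; ring_nf
      _ ≤ Real.exp u * eps k := by
          apply mul_le_mul_of_nonneg_left heps (Real.exp_pos u).le
  have h2 : u ^ (2:ℕ) / 16 ≤ Real.exp (u / 2) := by
    have h3 : u / 4 + 1 ≤ Real.exp (u / 4) := Real.add_one_le_exp (u / 4)
    have h4 : Real.exp (u / 2) = Real.exp (u / 4) * Real.exp (u / 4) := by
      rw [← Real.exp_add]; ring_nf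
    nlinarith [Real.exp_pos (u / 4)]
  linarith

lemma aa_ge {k : ℕ} (hk : 16 ≤ Real.log k) : 16 ≤ aa k ∧ Real.log k ≤ aa k := by
  have h := aa_ge_sq hk
  constructor <;> nlinarith

lemma nseq_le (k : ℕ) : (nseq k : ℝ) ≤ Real.exp (aa k) := by
  rw [nseq_eq]
  exact Nat.floor_le (Real.exp_pos _).le

lemma nseq_ge {k : ℕ} (hk : 16 ≤ Real.log k) :
    Real.exp (aa k - eps k) ≤ (nseq k : ℝ) := by
  have ha := aa_ge hk
  have hhl := rpow16_le_half_log hk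
  have h1 : Real.exp (aa k) < (nseq k : ℝ) + 1 := by
    rw [nseq_eq]; exact Nat.lt_floor_add_one _
  have he1 : eps k ≤ 1 := eps_le_one k
  have hmid : (Real.log k) ^ ((1:ℝ)/6) ≤ aa k - eps k := by
    nlinarith [ha.1, ha.2, hhl, (eps_pos k).le]
  have e3 : Real.exp ((Real.log k) ^ ((1:ℝ)/6)) ≤ Real.exp (aa k - eps k) :=
    Real.exp_le_exp.mpr hmid
  have e4 : Real.exp ((Real.log k) ^ ((1:ℝ)/6)) * eps k = 1 := by
    rw [eps, ← Real.exp_add]; simp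
  have e2 : 1 + eps k ≤ Real.exp (eps k) := by
    have := Real.add_one_le_exp (eps k); linarith
  have e1 : Real.exp (aa k) = Real.exp (aa k - eps k) * Real.exp (eps k) := by
    rw [← Real.exp_add]; ring_nf
  have e5 : Real.exp (aa k - eps k) * (1 + eps k) ≤ Real.exp (aa k) := by
    rw [e1]
    exact mul_le_mul_of_nonneg_left e2 (Real.exp_pos _).le
  have e6 : Real.exp ((Real.log k) ^ ((1:ℝ)/6)) * eps k ≤ Real.exp (aa k - eps k) * eps k :=
    mul_le_mul_of_nonneg_right e3 (eps_pos k).le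
  nlinarith [Real.exp_pos (aa k - eps k)]

lemma log_nseq_bounds {k : ℕ} (hk : 16 ≤ Real.log k) :
    aa k - eps k ≤ Real.log (nseq k) ∧ Real.log (nseq k) ≤ aa k := by
  have hge := nseq_ge hk
  have hle := nseq_le k
  have hpos : (0:ℝ) < (nseq k : ℝ) := lt_of_lt_of_le (Real.exp_pos _) hge
  constructor
  · exact (Real.le_log_iff_exp_le hpos).mpr hge
  · exact (Real.log_le_iff_le_exp hpos).mpr hle

lemma llog_nseq_eq {k : ℕ} (hk : 16 ≤ Real.log k) :
    llog (nseq k) = Real.log (Real.log (nseq k)) := by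
  have hge := nseq_ge hk
  have ha := aa_ge hk
  have he1 := eps_le_one k
  rw [llog, max_eq_left]
  calc Real.exp 1 ≤ Real.exp (aa k - eps k) := Real.exp_le_exp.mpr (by linarith)
    _ ≤ (nseq k : ℝ) := hge

lemma log_succ_ge {k : ℕ} (hk : 16 ≤ Real.log k) : 16 ≤ Real.log (k + 1 : ℕ) := by
  have hk0 : (0:ℝ) < (k:ℝ) := by
    rcases Nat.eq_zero_or_pos k with h | h
    · subst h; simp only [Nat.cast_zero, Real.log_zero] at hk; linarith
    · exact_mod_cast h
  calc (16:ℝ) ≤ Real.log k := hk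
    _ ≤ Real.log (k + 1 : ℕ) := Real.log_le_log hk0 (by push_cast; linarith)

end SVaux

set_option maxHeartbeats 2000000 in
theorem statement :
    Tendsto (fun k : ℕ =>
      (1 - Real.sqrt (((nseq k : ℝ) * llog (nseq k)) /
          ((nseq (k + 1) : ℝ) * llog (nseq (k + 1))))) *
        llog (nseq (k + 1)) ^ ((2:ℝ)/3)) atTop (nhds 0) := by
  classical
  have hev : ∀ᶠ k : ℕ in atTop, 16 ≤ Real.log k :=
    (Real.tendsto_log_atTop.comp tendsto_natCast_atTop_atTop).eventually_ge_atTop 16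
  have key : ∀ k : ℕ, 16 ≤ Real.log k →
      0 ≤ (1 - Real.sqrt (((nseq k : ℝ) * llog (nseq k)) /
          ((nseq (k + 1) : ℝ) * llog (nseq (k + 1))))) *
        llog (nseq (k + 1)) ^ ((2:ℝ)/3) ∧
      (1 - Real.sqrt (((nseq k : ℝ) * llog (nseq k)) /
          ((nseq (k + 1) : ℝ) * llog (nseq (k + 1))))) *
        llog (nseq (k + 1)) ^ ((2:ℝ)/3) ≤
        6 * (SVaux.eps k * (Real.log k) ^ ((2:ℝ)/3)) := by
    intro k hk
    have hk' : 16 ≤ Real.log (k + 1 : ℕ) := SVaux.log_succ_ge hk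
    have hknat : 1 ≤ k := by
      by_contra h
      push_neg at h
      interval_cases k
      · simp only [Nat.cast_zero, Real.log_zero] at hk; linarith
    set ε := SVaux.eps k with hε
    have hε0 : 0 < ε := SVaux.eps_pos k
    have hε1 : ε ≤ 1 := SVaux.eps_le_one k
    have hε1' := SVaux.eps_le_one (k + 1)
    have hεanti : SVaux.eps (k + 1) ≤ ε := SVaux.eps_antitone hknat
    have haa1 := SVaux.aa_ge hk
    have haa2 := SVaux.aa_ge hk'
    have hmono : SVaux.aa k ≤ SVaux.aa (k + 1) := SVaux.aa_mono (by linarith)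
    have hsucc : SVaux.aa (k + 1) ≤ SVaux.aa k + ε := SVaux.aa_succ_le hknat
    set N1 : ℝ := (nseq k : ℝ) with hN1
    set N2 : ℝ := (nseq (k + 1) : ℝ) with hN2
    have hlg1 := SVaux.log_nseq_bounds hk
    have hlg2 := SVaux.log_nseq_bounds hk'
    have hN1pos : 0 < N1 := lt_of_lt_of_le (Real.exp_pos _) (SVaux.nseq_ge hk)
    have hN2pos : 0 < N2 := lt_of_lt_of_le (Real.exp_pos _) (SVaux.nseq_ge hk')
    have hN12 : N1 ≤ N2 := by
      rw [hN1, hN2]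
      have : nseq k ≤ nseq (k + 1) := by
        rw [SVaux.nseq_eq, SVaux.nseq_eq]
        exact Nat.floor_le_floor (Real.exp_le_exp.mpr hmono)
      exact_mod_cast this
    have hlogN1 : 15 ≤ Real.log N1 := by
      have := hlg1.1; rw [← hN1] at this; linarith [haa1.1]
    have hlogN2 : 15 ≤ Real.log N2 := by
      have := hlg2.1; rw [← hN2] at this; linarith [haa2.1]
    have hlogdiff : Real.log N2 - Real.log N1 ≤ 2 * ε := by
      have h1 := hlg1.1; have h2 := hlg2.2
      rw [← hN1] at h1; rw [← hN2] at h2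
      linarith
    set L1 : ℝ := llog ((nseq k : ℝ)) with hL1
    set L2 : ℝ := llog ((nseq (k + 1) : ℝ)) with hL2
    have hL1eq : L1 = Real.log (Real.log N1) := by
      rw [hL1, SVaux.llog_nseq_eq hk, hN1]
    have hL2eq : L2 = Real.log (Real.log N2) := by
      rw [hL2, SVaux.llog_nseq_eq hk', hN2]
    have hexp1lt : Real.exp 1 < 15 := by
      have := Real.exp_one_lt_d9; linarith
    have hL1ge1 : 1 ≤ L1 := by
      rw [hL1eq, Real.le_log_iff_exp_le (by linarith)]
      linarith
    have hL2ge1 : 1 ≤ L2 := by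
      rw [hL2eq, Real.le_log_iff_exp_le (by linarith)]
      linarith
    have hL12 : L1 ≤ L2 := by
      rw [hL1eq, hL2eq]
      apply Real.log_le_log (by linarith)
      apply Real.log_le_log (by linarith) hN12
    -- L2 - L1 ≤ ε
    have hLdiff : L2 - L1 ≤ ε := by
      have hr : (0:ℝ) < Real.log N2 / Real.log N1 := div_pos (by linarith) (by linarith)
      have h1 : Real.log (Real.log N2 / Real.log N1) ≤ Real.log N2 / Real.log N1 - 1 :=
        Real.log_le_sub_one_of_pos hr
      have h2 : Real.log (Real.log N2 / Real.log N1) = L2 - L1 := by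
        rw [Real.log_div (by linarith) (by linarith), hL1eq, hL2eq]
      have h3 : Real.log N2 / Real.log N1 - 1 = (Real.log N2 - Real.log N1) / Real.log N1 := by
        field_simp
      have h4 : (Real.log N2 - Real.log N1) / Real.log N1 ≤ ε := by
        rw [div_le_iff₀ (by linarith : (0:ℝ) < Real.log N1)]
        nlinarith
      linarith
    -- L2 ≤ 2 log k
    have hlogk0 : (0:ℝ) < (k:ℝ) := by
      have : (1:ℕ) ≤ k := hknat
      exact_mod_cast Nat.pos_of_ne_zero (by omega)
    have hL2le : L2 ≤ 2 * Real.log k := by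
      have haak : SVaux.aa (k + 1) ≤ (k:ℝ) + 1 := by
        rw [SVaux.aa]
        push_cast
        nlinarith [SVaux.eps_pos (k + 1), hε1']
      have hlogN2le : Real.log N2 ≤ (k:ℝ) + 1 := by
        have := hlg2.2; rw [← hN2] at this; linarith
      have h2k : (k:ℝ) + 1 ≤ 2 * (k:ℝ) := by
        have : (1:ℝ) ≤ (k:ℝ) := by exact_mod_cast hknat
        linarith
      have hlog2 : Real.log 2 ≤ 1 := by
        have := Real.log_two_lt_d9; linarith
      calc L2 = Real.log (Real.log N2) := hL2eq
        _ ≤ Real.log (2 * (k:ℝ)) := Real.log_le_log (by linarith) (by linarith)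
        _ = Real.log 2 + Real.log k := Real.log_mul (by norm_num) (by linarith : (0:ℝ) < (k:ℝ)).ne'
        _ ≤ 2 * Real.log k := by linarith
    -- the ratio
    clear_value N1 N2 L1 L2
    clear hN1 hN2 hL1 hL2 hL1eq hL2eq hlg1 hlg2
    set x : ℝ := (N1 * L1) / (N2 * L2) with hx
    have hden : 0 < N2 * L2 := mul_pos hN2pos (by linarith)
    have hx0 : 0 ≤ x := div_nonneg (mul_nonneg hN1pos.le (by linarith)) hden.le
    have hx1 : x ≤ 1 := by
      rw [hx, div_le_one hden]
      apply mul_le_mul hN12 hL12 (by linarith) (by linarith)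
    have hsq : x ≤ Real.sqrt x := by
      have h1 : x ^ 2 ≤ x := by nlinarith [hx0, hx1]
      calc x = Real.sqrt (x ^ 2) := (Real.sqrt_sq hx0).symm
        _ ≤ Real.sqrt x := Real.sqrt_le_sqrt h1
    have hsqle1 : Real.sqrt x ≤ 1 := by
      rw [show (1:ℝ) = Real.sqrt 1 from (Real.sqrt_one).symm]
      exact Real.sqrt_le_sqrt hx1
    have hL2rp : (0:ℝ) ≤ L2 ^ ((2:ℝ)/3) := Real.rpow_nonneg (by linarith) _
    constructor
    · apply mul_nonneg (by linarith) hL2rp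
    · -- upper bound
      set p : ℝ := N1 / N2 with hp
      set q : ℝ := L1 / L2 with hq
      have hxeq : x = p * q := by
        rw [hx, hp, hq, div_mul_div_comm]
      have hp0 : 0 ≤ p := div_nonneg hN1pos.le hN2pos.le
      have hp1 : p ≤ 1 := by rw [hp, div_le_one hN2pos]; exact hN12
      have hq0 : 0 ≤ q := div_nonneg (by linarith) (by linarith)
      have hq1 : q ≤ 1 := by rw [hq, div_le_one (by linarith)]; exact hL12
      have hp2 : 1 - p ≤ 2 * ε := by
        have hlp : Real.log p ≤ p - 1 := Real.log_le_sub_one_of_pos (div_pos hN1pos hN2pos)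
        have : Real.log p = Real.log N1 - Real.log N2 := by
          rw [hp, Real.log_div (by linarith) (by linarith)]
        linarith
      have hq2 : 1 - q ≤ ε := by
        have h1 : 1 - q = (L2 - L1) / L2 := by
          rw [hq]; field_simp
        have h2 : (L2 - L1) / L2 ≤ L2 - L1 := by
          apply div_le_self (by linarith) hL2ge1
        linarith
      have hx2 : 1 - x ≤ 3 * ε := by
        rw [hxeq]
        nlinarith [mul_nonneg (sub_nonneg.mpr hp1) (sub_nonneg.mpr hq1)]
      have step1 : (1 - Real.sqrt x) * L2 ^ ((2:ℝ)/3) ≤ (1 - x) * L2 ^ ((2:ℝ)/3) := by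
        apply mul_le_mul_of_nonneg_right (by linarith) hL2rp
      have step2 : (1 - x) * L2 ^ ((2:ℝ)/3) ≤ 3 * ε * L2 ^ ((2:ℝ)/3) := by
        apply mul_le_mul_of_nonneg_right hx2 hL2rp
      have hL2rpow : L2 ^ ((2:ℝ)/3) ≤ 2 * (Real.log k) ^ ((2:ℝ)/3) := by
        have hlogk1 : (1:ℝ) ≤ Real.log k := by linarith
        calc L2 ^ ((2:ℝ)/3) ≤ (2 * Real.log k) ^ ((2:ℝ)/3) :=
              Real.rpow_le_rpow (by linarith) hL2le (by norm_num)
          _ = (2:ℝ) ^ ((2:ℝ)/3) * (Real.log k) ^ ((2:ℝ)/3) :=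
              Real.mul_rpow (by norm_num) (by linarith)
          _ ≤ 2 * (Real.log k) ^ ((2:ℝ)/3) := by
              apply mul_le_mul_of_nonneg_right _ (Real.rpow_nonneg (by linarith) _)
              calc (2:ℝ) ^ ((2:ℝ)/3) ≤ (2:ℝ) ^ ((1:ℝ)) :=
                    Real.rpow_le_rpow_of_exponent_le (by norm_num) (by norm_num)
                _ = 2 := Real.rpow_one 2
      have step3 : 3 * ε * L2 ^ ((2:ℝ)/3) ≤ 3 * ε * (2 * (Real.log k) ^ ((2:ℝ)/3)) := by
        apply mul_le_mul_of_nonneg_left hL2rpow (by linarith)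
      calc (1 - Real.sqrt x) * L2 ^ ((2:ℝ)/3) ≤ (1 - x) * L2 ^ ((2:ℝ)/3) := step1
        _ ≤ 3 * ε * L2 ^ ((2:ℝ)/3) := step2
        _ ≤ 3 * ε * (2 * (Real.log k) ^ ((2:ℝ)/3)) := step3
        _ = 6 * (ε * (Real.log k) ^ ((2:ℝ)/3)) := by ring
  -- the dominating sequence tends to 0
  have hG : Tendsto (fun k : ℕ => 6 * (SVaux.eps k * (Real.log k) ^ ((2:ℝ)/3))) atTop (nhds 0) := by
    have h1 : Tendsto (fun k : ℕ => (Real.log k) ^ ((1:ℝ)/6)) atTop atTop :=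
      (tendsto_rpow_atTop (by norm_num : (0:ℝ) < 1/6)).comp
        (Real.tendsto_log_atTop.comp tendsto_natCast_atTop_atTop)
    have h2 : Tendsto (fun x : ℝ => x ^ (4:ℕ) * Real.exp (-x)) atTop (nhds 0) :=
      Real.tendsto_pow_mul_exp_neg_atTop_nhds_zero 4
    have h3 : Tendsto (fun k : ℕ =>
        ((Real.log k) ^ ((1:ℝ)/6)) ^ (4:ℕ) * Real.exp (-((Real.log k) ^ ((1:ℝ)/6))))
        atTop (nhds 0) := h2.comp h1
    have h4 : (fun k : ℕ => SVaux.eps k * (Real.log k) ^ ((2:ℝ)/3)) =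
        (fun k : ℕ =>
          ((Real.log k) ^ ((1:ℝ)/6)) ^ (4:ℕ) * Real.exp (-((Real.log k) ^ ((1:ℝ)/6)))) := by
      funext k
      rw [SVaux.eps, mul_comm]
      congr 1
      rw [← Real.rpow_natCast ((Real.log k) ^ ((1:ℝ)/6)) 4,
        ← Real.rpow_mul (SVaux.log_nonneg' k)]
      norm_num
    rw [show (0:ℝ) = 6 * 0 by ring]
    apply Tendsto.const_mul
    rw [h4]
    exact h3
  apply tendsto_of_tendsto_of_tendsto_of_le_of_le' (tendsto_const_nhds (x := (0:ℝ))) hG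
  · filter_upwards [hev] with k hk
    exact (key k hk).1
  · filter_upwards [hev] with k hk
    exact (key k hk).2
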